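/- arXiv:2504.04364 — 2 statements merged into one kernel-verified Lean document; each statement's English description precedes it below -/
import Mathlib

section
/- If H is a disjoint union of paths whose longest path has n1(H) vertices and second-longest has n2(H) vertices, and K1 ∨ H contains no t vertex-disjoint copies of P_l, then n1(H) + n2(H) ≤ (t−1)l + l − 2. -/
open SimpleGraph

/-- `G` contains a copy of `F` as a subgraph: an injective graph homomorphism. -/
def ContainsCopy {α β : Type*} (F : SimpleGraph α) (G : SimpleGraph β) : Prop :=
  ∃ f : α → β, Function.Injective f ∧ ∀ a b, F.Adj a b → G.Adj (f a) (f b)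

/-- The cone over a graph: a new apex vertex joined to every vertex of `H`.
`cone H = K1 ∨ H`, and `cone (cone H) = K2 ∨ H`. -/
def cone {β : Type*} (H : SimpleGraph β) : SimpleGraph (Option β) :=
  SimpleGraph.fromRel (fun x y =>
    x = none ∨ ∃ a b, x = some a ∧ y = some b ∧ H.Adj a b)

/-- The disjoint union of paths with orders `n 0, n 1, n 2, …`:
for each `i`, the vertices `(i, 0), …, (i, n i - 1)` form a path. -/
def pathsUnion (n : ℕ → ℕ) : SimpleGraph (ℕ × ℕ) :=
  SimpleGraph.fromRel (fun x y => x.1 = y.1 ∧ x.2 + 1 = y.2 ∧ y.2 < n x.1)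

/-- `t` pairwise vertex-disjoint copies of the path `P_l`. -/
def tPaths (t l : ℕ) : SimpleGraph (Fin t × Fin l) :=
  SimpleGraph.fromRel (fun x y => x.1 = y.1 ∧ (x.2 : ℕ) + 1 = (y.2 : ℕ))

/-- The spider (starlike tree) with `t` branches each having `m` vertices
(besides the common center). -/
def spider (t m : ℕ) : SimpleGraph (Option (Fin t × Fin m)) :=
  SimpleGraph.fromRel (fun x y =>
    (x = none ∧ ∃ p : Fin t × Fin m, y = some p ∧ (p.2 : ℕ) = 0) ∨
    (∃ p q : Fin t × Fin m, x = some p ∧ y = some q ∧ p.1 = q.1 ∧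
      (p.2 : ℕ) + 1 = (q.2 : ℕ)))

/-- `F` is a minor of `G`: branch sets realization. -/
def IsMinor {α β : Type*} (F : SimpleGraph α) (G : SimpleGraph β) : Prop :=
  ∃ B : α → G.Subgraph,
    (∀ a, (B a).verts.Nonempty) ∧
    (∀ a, (B a).Connected) ∧
    (∀ a a', a ≠ a' → Disjoint (B a).verts (B a').verts) ∧
    (∀ a a', F.Adj a a' → ∃ u ∈ (B a).verts, ∃ v ∈ (B a').verts, G.Adj u v)

/-- Planarity, via Wagner's forbidden-minor characterization. -/
def IsPlanar {β : Type*} (G : SimpleGraph β) : Prop :=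
  ¬ IsMinor (⊤ : SimpleGraph (Fin 5)) G ∧
  ¬ IsMinor (completeBipartiteGraph (Fin 3) (Fin 3)) G

/-- Outerplanarity, via the forbidden-minor characterization. -/
def IsOuterplanar {β : Type*} (G : SimpleGraph β) : Prop :=
  ¬ IsMinor (⊤ : SimpleGraph (Fin 4)) G ∧
  ¬ IsMinor (completeBipartiteGraph (Fin 2) (Fin 3)) G

/-- The spectral radius of a finite graph: the largest (adjacency) eigenvalue. -/
noncomputable def specRad {V : Type*} [Fintype V] (G : SimpleGraph V) : ℝ :=
  haveI := Classical.decRel G.Adj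
  sSup {μ : ℝ | ∃ x : V → ℝ, x ≠ 0 ∧ (G.adjMatrix ℝ).mulVec x = μ • x}

lemma cone_some_some {β : Type*} {H : SimpleGraph β} {a b : β} (h : H.Adj a b) :
    (cone H).Adj (some a) (some b) := by
  rw [cone, fromRel_adj]
  exact ⟨by simp only [ne_eq, Option.some.injEq]; exact h.ne,
    Or.inl (Or.inr ⟨a, b, rfl, rfl, h⟩)⟩

lemma cone_none_some {β : Type*} {H : SimpleGraph β} (b : β) :
    (cone H).Adj none (some b) := by
  rw [cone, fromRel_adj]
  exact ⟨by simp, Or.inl (Or.inl rfl)⟩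

lemma pathsUnion_adj (n : ℕ → ℕ) (i j : ℕ) (h : j + 1 < n i) :
    (pathsUnion n).Adj (i, j) (i, j + 1) := by
  rw [pathsUnion, fromRel_adj]
  exact ⟨by simp, Or.inl ⟨rfl, rfl, h⟩⟩

lemma mul_add_lt_of_lt {l s s' j : ℕ} (h : s < s') (hj : j < l) : s * l + j < s' * l := by
  have h1 : (s + 1) * l ≤ s' * l := Nat.mul_le_mul h le_rfl
  have h2 : (s + 1) * l = s * l + l := by ring
  omega

lemma linearize_inj {l s s' j j' : ℕ} (hj : j < l) (hj' : j' < l)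
    (h : s * l + j = s' * l + j') : s = s' ∧ j = j' := by
  rcases lt_trichotomy s s' with hs | hs | hs
  · have := mul_add_lt_of_lt hs hj; omega
  · subst hs
    exact ⟨rfl, by omega⟩
  · have := mul_add_lt_of_lt hs hj'; omega

/-- The embedding pattern for the last batch of paths:
positions `[0, A)` go to path 0, positions `[A, T)` go to path 1,
positions `[T, T+r)` go back to path 0 (its tail), position `T+r` is the apex,
and later positions continue on path 1. Here `T = A + B`. -/
def gmap (A T B r p : ℕ) : Option (ℕ × ℕ) :=
  if p < A then some (0, p)
  else if p < T then some (1, p - A)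
  else if p < T + r then some (0, p - B)
  else if p = T + r then none
  else some (1, p - A - r - 1)

lemma gmap_eval1 {A T B r p : ℕ} (h : p < A) : gmap A T B r p = some (0, p) := by
  unfold gmap; rw [if_pos h]

lemma gmap_eval2 {A T B r p : ℕ} (h1 : ¬ p < A) (h2 : p < T) :
    gmap A T B r p = some (1, p - A) := by
  unfold gmap; rw [if_neg h1, if_pos h2]

lemma gmap_eval3 {A T B r p : ℕ} (h1 : ¬ p < A) (h2 : ¬ p < T) (h3 : p < T + r) :
    gmap A T B r p = some (0, p - B) := by
  unfold gmap; rw [if_neg h1, if_neg h2, if_pos h3]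

lemma gmap_eval4 {A T B r p : ℕ} (h1 : ¬ p < A) (h2 : ¬ p < T) (h3 : ¬ p < T + r)
    (h4 : p = T + r) : gmap A T B r p = none := by
  unfold gmap; rw [if_neg h1, if_neg h2, if_neg h3, if_pos h4]

lemma gmap_eval5 {A T B r p : ℕ} (h1 : ¬ p < A) (h2 : ¬ p < T) (h3 : ¬ p < T + r)
    (h4 : ¬ p = T + r) : gmap A T B r p = some (1, p - A - r - 1) := by
  unfold gmap; rw [if_neg h1, if_neg h2, if_neg h3, if_neg h4]

lemma gmap_inj (A B r p q : ℕ)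
    (h : gmap A (A + B) B r p = gmap A (A + B) B r q) : p = q := by
  unfold gmap at h
  split_ifs at h <;>
    first
      | omega
      | (simp only [Option.some.injEq, Prod.mk.injEq] at h; omega)
      | simp at h

lemma gmap_edge (n : ℕ → ℕ) (A B r S j l : ℕ) (hrl : r < l)
    (hAr : A + r = n 0) (hBn : B + l ≤ r + n 1 + 1)
    (hj : j + 1 < l)
    (hs1 : S + l ≤ A ∨ A ≤ S)
    (hs2 : S + l ≤ A + B ∨ S = A + B) :
    (cone (pathsUnion n)).Adj (gmap A (A + B) B r (S + j))
      (gmap A (A + B) B r (S + j + 1)) := by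
  rcases hs1 with hs1 | hs1
  · -- whole path inside region 1
    rw [gmap_eval1 (show S + j < A by omega), gmap_eval1 (show S + j + 1 < A by omega)]
    exact cone_some_some (pathsUnion_adj n 0 (S + j) (by omega))
  · rcases hs2 with hs2 | hs2
    · -- whole path inside region 2
      rw [gmap_eval2 (show ¬ S + j < A by omega) (show S + j < A + B by omega),
        gmap_eval2 (show ¬ S + j + 1 < A by omega) (show S + j + 1 < A + B by omega),
        show S + j + 1 - A = (S + j - A) + 1 by omega]
      exact cone_some_some (pathsUnion_adj n 1 (S + j - A) (by omega))
    · -- the special last path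
      subst hs2
      by_cases hc1 : j + 1 < r
      · rw [gmap_eval3 (by omega) (by omega) (by omega),
          gmap_eval3 (by omega) (by omega) (by omega),
          show A + B + j - B = A + j by omega,
          show A + B + j + 1 - B = (A + j) + 1 by omega]
        exact cone_some_some (pathsUnion_adj n 0 (A + j) (by omega))
      · by_cases hc2 : j + 1 = r
        · rw [gmap_eval3 (by omega) (by omega) (by omega),
            gmap_eval4 (by omega) (by omega) (by omega) (by omega)]
          exact ((cone_none_some _).symm)
        · by_cases hc3 : j = r
          · rw [gmap_eval4 (by omega) (by omega) (by omega) (by omega),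
              gmap_eval5 (by omega) (by omega) (by omega) (by omega)]
            exact cone_none_some _
          · rw [gmap_eval5 (by omega) (by omega) (by omega) (by omega),
              gmap_eval5 (by omega) (by omega) (by omega) (by omega),
              show A + B + j + 1 - A - r - 1 = (A + B + j - A - r - 1) + 1 by omega]
            exact cone_some_some (pathsUnion_adj n 1 (A + B + j - A - r - 1) (by omega))

lemma caseB (n : ℕ → ℕ) (t l a b r : ℕ) (hl : 3 ≤ l) (hrl : r < l)
    (hab : a + b + 1 = t)
    (hAr : a * l + r = n 0)
    (hBn : b * l + l ≤ r + n 1 + 1) :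
    ContainsCopy (tPaths t l) (cone (pathsUnion n)) := by
  refine ⟨fun x => gmap (a * l) (a * l + b * l) (b * l) r ((x.1 : ℕ) * l + (x.2 : ℕ)),
    ?_, ?_⟩
  · intro x y hxy
    have hp := gmap_inj _ _ _ _ _ hxy
    obtain ⟨h1, h2⟩ := linearize_inj x.2.isLt y.2.isLt hp
    obtain ⟨x1, x2⟩ := x
    obtain ⟨y1, y2⟩ := y
    simp only [Prod.mk.injEq]
    exact ⟨Fin.ext h1, Fin.ext h2⟩
  · have key : ∀ x y : Fin t × Fin l, x.1 = y.1 → (x.2 : ℕ) + 1 = (y.2 : ℕ) →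
        (cone (pathsUnion n)).Adj
          (gmap (a * l) (a * l + b * l) (b * l) r ((x.1 : ℕ) * l + (x.2 : ℕ)))
          (gmap (a * l) (a * l + b * l) (b * l) r ((y.1 : ℕ) * l + (y.2 : ℕ))) := by
      intro x y h1 h2
      have hs1 : (x.1 : ℕ) * l + l ≤ a * l ∨ a * l ≤ (x.1 : ℕ) * l := by
        rcases Nat.lt_or_ge (x.1 : ℕ) a with h | h
        · left
          calc (x.1 : ℕ) * l + l = ((x.1 : ℕ) + 1) * l := by ring
            _ ≤ a * l := Nat.mul_le_mul h le_rfl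
        · right; exact Nat.mul_le_mul h le_rfl
      have hxt : (x.1 : ℕ) < t := x.1.isLt
      have hs2 : (x.1 : ℕ) * l + l ≤ a * l + b * l ∨ (x.1 : ℕ) * l = a * l + b * l := by
        rcases Nat.lt_or_ge (x.1 : ℕ) (a + b) with h | h
        · left
          calc (x.1 : ℕ) * l + l = ((x.1 : ℕ) + 1) * l := by ring
            _ ≤ (a + b) * l := Nat.mul_le_mul h le_rfl
            _ = a * l + b * l := by ring
        · right
          have h' : (x.1 : ℕ) = a + b := by omega
          rw [h', add_mul]
      have e : (y.1 : ℕ) * l + (y.2 : ℕ) = (x.1 : ℕ) * l + (x.2 : ℕ) + 1 := by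
        rw [← h1, ← h2]; ring
      rw [e]
      have hj : (x.2 : ℕ) + 1 < l := by rw [h2]; exact y.2.isLt
      exact gmap_edge n (a * l) (b * l) r ((x.1 : ℕ) * l) (x.2 : ℕ) l hrl hAr hBn hj hs1 hs2
    intro x y hxy
    rw [tPaths, fromRel_adj] at hxy
    obtain ⟨hne, h | h⟩ := hxy
    · exact key x y h.1 h.2
    · exact (key y x h.1 h.2).symm

theorem K1_join_linearForest_tPl_free (t l : ℕ) (ht : 2 ≤ t) (hl : 3 ≤ l)
    (n : ℕ → ℕ) (hmono : Antitone n)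
    (hfree : ¬ ContainsCopy (tPaths t l) (cone (pathsUnion n))) :
    n 0 + n 1 ≤ (t - 1) * l + l - 2 := by
  by_contra hcon
  push_neg at hcon
  apply hfree
  have hl0 : 0 < l := by omega
  have hte : (t - 1) * l + l = t * l := by
    have h1 : (t - 1 + 1) * l = t * l := by rw [Nat.sub_add_cancel (by omega)]
    rw [add_mul, one_mul] at h1
    exact h1
  have ht6 : 6 ≤ t * l := by
    calc (6 : ℕ) = 2 * 3 := by norm_num
      _ ≤ t * l := Nat.mul_le_mul ht hl
  have htl : t * l ≤ n 0 + n 1 + 1 := by omega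
  by_cases hA : t * l ≤ n 0
  · -- all t paths fit inside path 0
    refine ⟨fun x => some (0, (x.1 : ℕ) * l + (x.2 : ℕ)), ?_, ?_⟩
    · intro x y hxy
      simp only [Option.some.injEq, Prod.mk.injEq, true_and] at hxy
      obtain ⟨h1, h2⟩ := linearize_inj x.2.isLt y.2.isLt hxy
      obtain ⟨x1, x2⟩ := x
      obtain ⟨y1, y2⟩ := y
      simp only [Prod.mk.injEq]
      exact ⟨Fin.ext h1, Fin.ext h2⟩
    · have key : ∀ x y : Fin t × Fin l, x.1 = y.1 → (x.2 : ℕ) + 1 = (y.2 : ℕ) →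
          (cone (pathsUnion n)).Adj (some (0, (x.1 : ℕ) * l + (x.2 : ℕ)))
            (some (0, (y.1 : ℕ) * l + (y.2 : ℕ))) := by
        intro x y h1 h2
        have e : (y.1 : ℕ) * l + (y.2 : ℕ) = (x.1 : ℕ) * l + (x.2 : ℕ) + 1 := by
          rw [← h1, ← h2]; ring
        rw [e]
        have hb : (x.1 : ℕ) * l + (x.2 : ℕ) + 1 < n 0 := by
          have h3 : ((x.1 : ℕ) + 1) * l ≤ t * l :=
            Nat.mul_le_mul (Nat.succ_le_of_lt x.1.isLt) le_rfl
          have h5 : (x.2 : ℕ) + 1 < l := by rw [h2]; exact y.2.isLt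
          have h6 : ((x.1 : ℕ) + 1) * l = (x.1 : ℕ) * l + l := by ring
          linarith
        exact cone_some_some (pathsUnion_adj n 0 _ hb)
      intro x y hxy
      rw [tPaths, fromRel_adj] at hxy
      obtain ⟨hne, h | h⟩ := hxy
      · exact key x y h.1 h.2
      · exact (key y x h.1 h.2).symm
  · push_neg at hA
    set a := n 0 / l with ha
    set r := n 0 % l with hr
    have hrl : r < l := Nat.mod_lt _ hl0
    have hAr : a * l + r = n 0 := by
      rw [ha, hr, mul_comm]
      exact Nat.div_add_mod _ _
    have hat : a < t := (Nat.div_lt_iff_lt_mul hl0).mpr hA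
    have hab : a + (t - 1 - a) + 1 = t := by omega
    have hsum : a * l + (t - 1 - a) * l + l = t * l := by
      calc a * l + (t - 1 - a) * l + l = (a + (t - 1 - a) + 1) * l := by ring
        _ = t * l := by rw [hab]
    have hBn : (t - 1 - a) * l + l ≤ r + n 1 + 1 := by
      have h7 : a * l + (t - 1 - a) * l + l ≤ n 0 + n 1 + 1 := by rw [hsum]; exact htl
      linarith
    exact caseB n t l a (t - 1 - a) r hl hrl hab hAr hBn
end

section
/- Let H be a disjoint union of paths whose three longest paths have orders n1 ≥ n2 ≥ n3 ≥ 1. Then the longest path of K2 ∨ H has exactly n1 + n2 + n3 + 2 vertices, and K2 ∨ (P_{n1} ∪ P_{n2} ∪ P_{n3}) contains a path P_i for every i with 3 ≤ i ≤ n1 + n2 + n3 + 2. -/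
open SimpleGraph

section Aux
variable {β : Type*} {H : SimpleGraph β}

lemma cone_adj_iff (x y : Option β) :
    (cone H).Adj x y ↔ x ≠ y ∧ (x = none ∨ y = none ∨
      ∃ u v, x = some u ∧ y = some v ∧ H.Adj u v) := by
  simp only [cone, SimpleGraph.fromRel_adj]
  constructor
  · rintro ⟨hne, h | h⟩
    · rcases h with h | ⟨u, v, hu, hv, huv⟩
      · exact ⟨hne, Or.inl h⟩
      · exact ⟨hne, Or.inr (Or.inr ⟨u, v, hu, hv, huv⟩)⟩
    · rcases h with h | ⟨u, v, hu, hv, huv⟩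
      · exact ⟨hne, Or.inr (Or.inl h)⟩
      · exact ⟨hne, Or.inr (Or.inr ⟨v, u, hv, hu, huv.symm⟩)⟩
  · rintro ⟨hne, h | h | ⟨u, v, hu, hv, huv⟩⟩
    · exact ⟨hne, Or.inl (Or.inl h)⟩
    · exact ⟨hne, Or.inr (Or.inl h)⟩
    · exact ⟨hne, Or.inl (Or.inr ⟨u, v, hu, hv, huv⟩)⟩

lemma coneCone_adj_iff (x y : Option (Option β)) :
    (cone (cone H)).Adj x y ↔ x ≠ y ∧ (x = none ∨ y = none ∨ x = some none ∨ y = some none ∨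
      ∃ u v, x = some (some u) ∧ y = some (some v) ∧ H.Adj u v) := by
  rw [cone_adj_iff]
  constructor
  · rintro ⟨hne, h | h | ⟨u, v, hu, hv, huv⟩⟩
    · exact ⟨hne, Or.inl h⟩
    · exact ⟨hne, Or.inr (Or.inl h)⟩
    · rw [cone_adj_iff] at huv
      obtain ⟨hne2, h | h | ⟨a, b, ha, hb, hab⟩⟩ := huv
      · exact ⟨hne, Or.inr (Or.inr (Or.inl (by rw [hu, h])))⟩
      · exact ⟨hne, Or.inr (Or.inr (Or.inr (Or.inl (by rw [hv, h]))))⟩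
      · exact ⟨hne, Or.inr (Or.inr (Or.inr (Or.inr ⟨a, b, by rw [hu, ha], by rw [hv, hb], hab⟩)))⟩
  · rintro ⟨hne, h | h | h | h | ⟨u, v, hu, hv, huv⟩⟩
    · exact ⟨hne, Or.inl h⟩
    · exact ⟨hne, Or.inr (Or.inl h)⟩
    · subst h
      rcases y with _ | y
      · exact ⟨hne, Or.inr (Or.inl rfl)⟩
      · refine ⟨hne, Or.inr (Or.inr ⟨none, y, rfl, rfl, ?_⟩)⟩
        rw [cone_adj_iff]
        exact ⟨fun hc => hne (by rw [hc]), Or.inl rfl⟩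
    · subst h
      rcases x with _ | x
      · exact ⟨hne, Or.inl rfl⟩
      · refine ⟨hne, Or.inr (Or.inr ⟨x, none, rfl, rfl, ?_⟩)⟩
        rw [cone_adj_iff]
        exact ⟨fun hc => hne (by rw [hc]), Or.inr (Or.inl rfl)⟩
    · refine ⟨hne, Or.inr (Or.inr ⟨some u, some v, hu, hv, ?_⟩)⟩
      rw [cone_adj_iff]
      refine ⟨fun hc => hne ?_, Or.inr (Or.inr ⟨u, v, rfl, rfl, huv⟩)⟩
      rw [hu, hv, hc]

lemma pathsUnion_adj_iff (n : ℕ → ℕ) (u v : ℕ × ℕ) :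
    (pathsUnion n).Adj u v ↔ u.1 = v.1 ∧ ((u.2 + 1 = v.2 ∧ v.2 < n u.1) ∨ (v.2 + 1 = u.2 ∧ u.2 < n u.1)) := by
  simp only [pathsUnion, SimpleGraph.fromRel_adj]
  constructor
  · rintro ⟨hne, ⟨h1, h2, h3⟩ | ⟨h1, h2, h3⟩⟩
    · exact ⟨h1, Or.inl ⟨h2, h3⟩⟩
    · exact ⟨h1.symm, Or.inr ⟨h2, by rw [← h1]; exact h3⟩⟩
  · rintro ⟨h1, ⟨h2, h3⟩ | ⟨h2, h3⟩⟩
    · refine ⟨?_, Or.inl ⟨h1, h2, h3⟩⟩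
      intro hc; rw [hc] at h2; omega
    · refine ⟨?_, Or.inr ⟨h1.symm, h2, by rw [h1] at h3; exact h3⟩⟩
      intro hc; rw [hc] at h2; omega

end Aux
def pathF (a b : ℕ) : ℕ → Option (Option (ℕ × ℕ)) := fun k =>
  if k < a then some (some (0, k))
  else if k = a then none
  else if k < a + 1 + b then some (some (1, k - a - 1))
  else if k = a + 1 + b then some none
  else some (some (2, k - a - b - 2))

lemma buildPath (m : ℕ → ℕ) (a b c : ℕ) (ha : a ≤ m 0) (hb : b ≤ m 1) (hc : c ≤ m 2) :
    ContainsCopy (pathGraph (a + b + c + 2)) (cone (cone (pathsUnion m))) := by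
  set F := pathF a b with hF
  have hinj : Function.Injective F := by
    intro k l h
    simp only [hF, pathF] at h
    split_ifs at h <;> simp_all [Option.some.injEq, Prod.mk.injEq] <;> omega
  have hstep : ∀ k, k + 1 < a + b + c + 2 →
      (cone (cone (pathsUnion m))).Adj (F k) (F (k+1)) := by
    intro k hk
    rw [coneCone_adj_iff]
    refine ⟨fun hc => by exact absurd (hinj hc) (by omega), ?_⟩
    rcases (show k + 1 < a ∨ k + 1 = a ∨ k = a ∨ (a < k ∧ k + 1 < a+1+b) ∨
        (a < k ∧ k + 1 = a+1+b) ∨ k = a+1+b ∨ a+1+b < k by omega) with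
      h|h|h|⟨h,h'⟩|⟨h,h'⟩|h|h
    · have e1 : F k = some (some (0, k)) := by simp only [hF, pathF]; rw [if_pos (by omega)]
      have e2 : F (k+1) = some (some (0, k+1)) := by simp only [hF, pathF]; rw [if_pos (by omega)]
      refine Or.inr (Or.inr (Or.inr (Or.inr ⟨(0,k), (0,k+1), e1, e2, ?_⟩)))
      rw [pathsUnion_adj_iff]
      exact ⟨rfl, Or.inl ⟨rfl, show k+1 < m 0 by omega⟩⟩
    · have e2 : F (k+1) = none := by
        simp only [hF, pathF]; rw [if_neg (by omega), if_pos (by omega)]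
      exact Or.inr (Or.inl e2)
    · have e1 : F k = none := by simp only [hF, pathF]; rw [if_neg (by omega), if_pos (by omega)]
      exact Or.inl e1
    · have e1 : F k = some (some (1, k - a - 1)) := by
        simp only [hF, pathF]; rw [if_neg (by omega), if_neg (by omega), if_pos (by omega)]
      have e2 : F (k+1) = some (some (1, k - a)) := by
        simp only [hF, pathF]; rw [if_neg (by omega), if_neg (by omega), if_pos (by omega)]
        congr 3
        omega
      refine Or.inr (Or.inr (Or.inr (Or.inr ⟨(1, k-a-1), (1, k-a), e1, e2, ?_⟩)))
      rw [pathsUnion_adj_iff]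
      exact ⟨rfl, Or.inl ⟨show (k-a-1)+1 = k-a by omega, show k-a < m 1 by omega⟩⟩
    · have e2 : F (k+1) = some none := by
        simp only [hF, pathF]; rw [if_neg (by omega), if_neg (by omega), if_neg (by omega),
          if_pos (by omega)]
      exact Or.inr (Or.inr (Or.inr (Or.inl e2)))
    · have e1 : F k = some none := by
        simp only [hF, pathF]; rw [if_neg (by omega), if_neg (by omega), if_neg (by omega),
          if_pos (by omega)]
      exact Or.inr (Or.inr (Or.inl e1))
    · have e1 : F k = some (some (2, k - a - b - 2)) := by
        simp only [hF, pathF]; rw [if_neg (by omega), if_neg (by omega), if_neg (by omega),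
          if_neg (by omega)]
      have e2 : F (k+1) = some (some (2, k - a - b - 1)) := by
        simp only [hF, pathF]; rw [if_neg (by omega), if_neg (by omega), if_neg (by omega),
          if_neg (by omega)]
        congr 3
        omega
      refine Or.inr (Or.inr (Or.inr (Or.inr ⟨(2, k-a-b-2), (2, k-a-b-1), e1, e2, ?_⟩)))
      rw [pathsUnion_adj_iff]
      exact ⟨rfl, Or.inl ⟨show (k-a-b-2)+1 = k-a-b-1 by omega, show k-a-b-1 < m 2 by omega⟩⟩
  refine ⟨fun k => F k, fun x y h => Fin.ext (hinj h), ?_⟩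
  intro u v huv
  rw [pathGraph_adj] at huv
  rcases huv with h | h
  · have := hstep u (by rw [h]; exact v.isLt)
    rwa [h] at this
  · have := hstep v (by rw [h]; exact u.isLt)
    rw [h] at this
    exact this.symm
lemma three_runs (n : ℕ → ℕ) (hmono : Antitone n) (h3 : 1 ≤ n 2)
    (L1 L2 L3 c1 c2 c3 : ℕ)
    (b1 : 2 ≤ L1 → L1 ≤ n c1) (b2 : 2 ≤ L2 → L2 ≤ n c2) (b3 : 2 ≤ L3 → L3 ≤ n c3)
    (p12 : 2 ≤ L1 → 2 ≤ L2 → c1 = c2 → L1 + L2 ≤ n c1)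
    (p13 : 2 ≤ L1 → 2 ≤ L3 → c1 = c3 → L1 + L3 ≤ n c1)
    (p23 : 2 ≤ L2 → 2 ≤ L3 → c2 = c3 → L2 + L3 ≤ n c2)
    (p123 : 2 ≤ L1 → 2 ≤ L2 → 2 ≤ L3 → c1 = c2 → c2 = c3 → L1 + L2 + L3 ≤ n c1) :
    L1 + L2 + L3 ≤ n 0 + n 1 + n 2 := by
  have hn10 : n 1 ≤ n 0 := hmono (by omega)
  have hn21 : n 2 ≤ n 1 := hmono (by omega)
  have hpair : ∀ c c', c ≠ c' → n c + n c' ≤ n 0 + n 1 := by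
    intro c c' hcc
    rcases Nat.lt_or_ge c c' with h | h
    · have t1 : n c ≤ n 0 := hmono (Nat.zero_le c)
      have t2 : n c' ≤ n 1 := hmono (by omega)
      omega
    · have t1 : n c' ≤ n 0 := hmono (Nat.zero_le c')
      have t2 : n c ≤ n 1 := hmono (by omega)
      omega
  have key : ∀ i j k, i < j → j < k → n i + n j + n k ≤ n 0 + n 1 + n 2 := by
    intro i j k hij hjk
    have t1 : n i ≤ n 0 := hmono (Nat.zero_le i)
    have t2 : n j ≤ n 1 := hmono (by omega)
    have t3 : n k ≤ n 2 := hmono (by omega)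
    omega
  have htrip : ∀ d1 d2 d3 : ℕ, d1 ≠ d2 → d1 ≠ d3 → d2 ≠ d3 →
      n d1 + n d2 + n d3 ≤ n 0 + n 1 + n 2 := by
    intro d1 d2 d3 h12 h13 h23
    rcases Nat.lt_or_ge d1 d2 with a12 | a12 <;>
      rcases Nat.lt_or_ge d1 d3 with a13 | a13 <;>
      rcases Nat.lt_or_ge d2 d3 with a23 | a23 <;>
      first
        | (have := key d1 d2 d3 (by omega) (by omega); omega)
        | (have := key d1 d3 d2 (by omega) (by omega); omega)
        | (have := key d2 d1 d3 (by omega) (by omega); omega)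
        | (have := key d2 d3 d1 (by omega) (by omega); omega)
        | (have := key d3 d1 d2 (by omega) (by omega); omega)
        | (have := key d3 d2 d1 (by omega) (by omega); omega)
        | omega
  by_cases h1 : 2 ≤ L1 <;> by_cases h2 : 2 ≤ L2 <;> by_cases h3' : 2 ≤ L3
  · by_cases e12 : c1 = c2
    · by_cases e23 : c2 = c3
      · have := p123 h1 h2 h3' e12 e23
        have := hmono (Nat.zero_le c1)
        omega
      · have := p12 h1 h2 e12
        have := b3 h3'
        have := hpair c1 c3 (by omega)
        omega
    · by_cases e13 : c1 = c3
      · have := p13 h1 h3' e13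
        have := b2 h2
        have := hpair c1 c2 e12
        omega
      · by_cases e23 : c2 = c3
        · have := p23 h2 h3' e23
          have := b1 h1
          have := hpair c1 c2 e12
          omega
        · have := b1 h1
          have := b2 h2
          have := b3 h3'
          have := htrip c1 c2 c3 e12 e13 e23
          omega
  · by_cases e12 : c1 = c2
    · have := p12 h1 h2 e12
      have := hmono (Nat.zero_le c1)
      omega
    · have := b1 h1; have := b2 h2; have := hpair c1 c2 e12; omega
  · by_cases e13 : c1 = c3
    · have := p13 h1 h3' e13
      have := hmono (Nat.zero_le c1)
      omega
    · have := b1 h1; have := b3 h3'; have := hpair c1 c3 e13; omega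
  · have := b1 h1; have := hmono (Nat.zero_le c1); omega
  · by_cases e23 : c2 = c3
    · have := p23 h2 h3' e23
      have := hmono (Nat.zero_le c2)
      omega
    · have := b2 h2; have := b3 h3'; have := hpair c2 c3 e23; omega
  · have := b2 h2; have := hmono (Nat.zero_le c2); omega
  · have := b3 h3'; have := hmono (Nat.zero_le c3); omega
  · omega

def ext2 (o : Option (Option (ℕ × ℕ))) : ℕ × ℕ := (o.getD none).getD (0, 0)

lemma no_long_core (n : ℕ → ℕ) (hmono : Antitone n) (h3 : 1 ≤ n 2) (N : ℕ)
    (hN : N = n 0 + n 1 + n 2 + 3) (g : ℕ → Option (Option (ℕ × ℕ)))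
    (hginj : ∀ i j, i < N → j < N → g i = g j → i = j)
    (hgadj : ∀ i, i + 1 < N → (cone (cone (pathsUnion n))).Adj (g i) (g (i+1))) :
    False := by
  have hn10 : n 1 ≤ n 0 := hmono (by omega)
  have hn21 : n 2 ≤ n 1 := hmono (by omega)
  have hN6 : 6 ≤ N := by omega
  -- run data
  have runData : ∀ s L, s + L ≤ N → 2 ≤ L →
      (∀ k, k < L → ¬(g (s+k) = none ∨ g (s+k) = some none)) →
      ∃ c S, S.card = L ∧ S ⊆ Finset.range (n c) ∧
        ∀ p ∈ S, ∃ k, k < L ∧ g (s+k) = some (some (c, p)) := by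
    intro s L hsL hL hnap
    have hform : ∀ k, k < L → g (s+k) = some (some (ext2 (g (s+k)))) := by
      intro k hk
      rcases he : g (s+k) with _ | (_ | cp)
      · exact absurd (Or.inl he) (hnap k hk)
      · exact absurd (Or.inr he) (hnap k hk)
      · rfl
    set q : ℕ → ℕ × ℕ := fun k => ext2 (g (s+k)) with hq
    have hform2 : ∀ k, k < L → g (s+k) = some (some (q k)) := hform
    have hadj : ∀ k, k + 1 < L → (pathsUnion n).Adj (q k) (q (k+1)) := by
      intro k hk
      have h := hgadj (s+k) (by omega)
      have e : s + k + 1 = s + (k+1) := by omega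
      rw [e, hform2 k (by omega), hform2 (k+1) hk, coneCone_adj_iff] at h
      obtain ⟨-, h⟩ := h
      rcases h with h | h | h | h | ⟨u, v, hu, hv, huv⟩
      · exact absurd h (by simp)
      · exact absurd h (by simp)
      · exact absurd h (by simp)
      · exact absurd h (by simp)
      · simp only [Option.some.injEq] at hu hv
        rw [show q k = u from hu, show q (k+1) = v from hv]
        exact huv
    have hcomp : ∀ k, k < L → (q k).1 = (q 0).1 := by
      intro k
      induction k with
      | zero => intro _; rfl
      | succ k ih =>
          intro hk
          have h := hadj k hk
          rw [pathsUnion_adj_iff] at h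
          rw [← h.1]
          exact ih (by omega)
    have hboth : ∀ k, k + 1 < L → (q k).2 < n (q 0).1 ∧ (q (k+1)).2 < n (q 0).1 := by
      intro k hk
      have h := hadj k hk
      rw [pathsUnion_adj_iff] at h
      have hc : n (q k).1 = n (q 0).1 := by rw [hcomp k (by omega)]
      rcases h.2 with ⟨h1, h2⟩ | ⟨h1, h2⟩ <;> omega
    have hpos : ∀ k, k < L → (q k).2 < n (q 0).1 := by
      intro k hk
      rcases (show k + 1 < L ∨ (1 ≤ k ∧ k + 1 = L) by omega) with h | ⟨hk1, hk2⟩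
      · exact (hboth k h).1
      · have h := hboth (k-1) (by omega)
        rw [show k - 1 + 1 = k by omega] at h
        exact h.2
    refine ⟨(q 0).1, (Finset.range L).image (fun k => (q k).2), ?_, ?_, ?_⟩
    · rw [Finset.card_image_of_injOn, Finset.card_range]
      intro k hk k' hk' he
      simp only [Finset.coe_range, Set.mem_Iio] at hk hk'
      have hqq : q k = q k' := Prod.ext (by rw [hcomp k hk, hcomp k' hk']) he
      have := hginj (s+k) (s+k') (by omega) (by omega)
        (by rw [hform2 k hk, hform2 k' hk', hqq])
      omega
    · intro p hp
      simp only [Finset.mem_image, Finset.mem_range] at hp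
      obtain ⟨k, hk, hkp⟩ := hp
      rw [Finset.mem_range, ← hkp]
      exact hpos k hk
    · intro p hp
      simp only [Finset.mem_image, Finset.mem_range] at hp
      obtain ⟨k, hk, hkp⟩ := hp
      refine ⟨k, hk, ?_⟩
      have hqp : q k = ((q 0).1, p) := by
        rw [← hcomp k hk, ← hkp]
      rw [hform2 k hk, hqp]
  -- apexes
  classical
  set A : Finset ℕ := (Finset.range N).filter (fun i => g i = none ∨ g i = some none) with hA
  have hANlt : ∀ i ∈ A, i < N := by
    intro i hi
    simp only [hA, Finset.mem_filter, Finset.mem_range] at hi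
    exact hi.1
  have hA2 : A.card ≤ 2 := by
    have hinjA : Set.InjOn g A := by
      intro i hi j hj he
      exact hginj i j (hANlt i hi) (hANlt j hj) he
    have h1 : A.card = (A.image g).card := (Finset.card_image_of_injOn hinjA).symm
    have h2 : A.image g ⊆ {none, some none} := by
      intro x hx
      simp only [Finset.mem_image] at hx
      obtain ⟨i, hi, hix⟩ := hx
      simp only [hA, Finset.mem_filter] at hi
      rcases hi.2 with h | h <;> simp [← hix, h]
    calc A.card = (A.image g).card := h1
      _ ≤ ({none, some none} : Finset (Option (Option (ℕ × ℕ)))).card :=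
          Finset.card_le_card h2
      _ ≤ 2 := by
          apply le_trans (Finset.card_insert_le _ _)
          simp
  obtain ⟨a, b, hab, haN, hbN, hcov⟩ : ∃ a b, a ≤ b ∧ a < N ∧ b < N ∧
      ∀ i, i < N → (g i = none ∨ g i = some none) → i = a ∨ i = b := by
    have hmemA : ∀ i, i < N → (g i = none ∨ g i = some none) → i ∈ A := by
      intro i hi hap
      simp only [hA, Finset.mem_filter, Finset.mem_range]
      exact ⟨hi, hap⟩
    rcases (show A.card = 0 ∨ A.card = 1 ∨ A.card = 2 by omega) with h | h | h
    · refine ⟨0, 0, le_rfl, by omega, by omega, fun i hi hap => ?_⟩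
      have := hmemA i hi hap
      rw [Finset.card_eq_zero.mp h] at this
      simp at this
    · obtain ⟨x, hx⟩ := Finset.card_eq_one.mp h
      have hxN : x < N := hANlt x (hx ▸ Finset.mem_singleton_self x)
      refine ⟨x, x, le_rfl, hxN, hxN, fun i hi hap => ?_⟩
      have := hmemA i hi hap
      rw [hx, Finset.mem_singleton] at this
      exact Or.inl this
    · obtain ⟨x, y, hxy, hs⟩ := Finset.card_eq_two.mp h
      have hxN : x < N := hANlt x (hs ▸ by simp)
      have hyN : y < N := hANlt y (hs ▸ by simp)
      rcases le_total x y with hle | hle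
      · refine ⟨x, y, hle, hxN, hyN, fun i hi hap => ?_⟩
        have := hmemA i hi hap
        rw [hs] at this
        simpa using this
      · refine ⟨y, x, hle, hyN, hxN, fun i hi hap => ?_⟩
        have := hmemA i hi hap
        rw [hs] at this
        simp at this
        tauto
  -- three runs
  set L1 := a with hL1
  set L2 := b - a - 1 with hL2
  set L3 := N - 1 - b with hL3
  have hsum : n 0 + n 1 + n 2 + 1 ≤ L1 + L2 + L3 := by omega
  have hr1 : ∀ k, k < L1 → ¬(g (0+k) = none ∨ g (0+k) = some none) := by
    intro k hk hap
    rcases hcov (0+k) (by omega) hap with h | h <;> omega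
  have hr2 : ∀ k, k < L2 → ¬(g (a+1+k) = none ∨ g (a+1+k) = some none) := by
    intro k hk hap
    rcases hcov (a+1+k) (by omega) hap with h | h <;> omega
  have hr3 : ∀ k, k < L3 → ¬(g (b+1+k) = none ∨ g (b+1+k) = some none) := by
    intro k hk hap
    rcases hcov (b+1+k) (by omega) hap with h | h <;> omega
  have hR : ∀ s L, s + L ≤ N →
      (∀ k, k < L → ¬(g (s+k) = none ∨ g (s+k) = some none)) →
      ∃ c S, 2 ≤ L → (S.card = L ∧ S ⊆ Finset.range (n c) ∧
        ∀ p ∈ S, ∃ k, k < L ∧ g (s+k) = some (some (c, p))) := by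
    intro s L hsL hnap
    by_cases h : 2 ≤ L
    · obtain ⟨c, S, hc⟩ := runData s L hsL h hnap
      exact ⟨c, S, fun _ => hc⟩
    · exact ⟨0, ∅, fun hh => absurd hh h⟩
  obtain ⟨c1, S1, hd1⟩ := hR 0 L1 (by omega) hr1
  obtain ⟨c2, S2, hd2⟩ := hR (a+1) L2 (by omega) hr2
  obtain ⟨c3, S3, hd3⟩ := hR (b+1) L3 (by omega) hr3
  have pairBound : ∀ s s' L L' c (S S' : Finset ℕ),
      (S.card = L ∧ S ⊆ Finset.range (n c) ∧
        ∀ p ∈ S, ∃ k, k < L ∧ g (s+k) = some (some (c, p))) →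
      (S'.card = L' ∧ S' ⊆ Finset.range (n c) ∧
        ∀ p ∈ S', ∃ k, k < L' ∧ g (s'+k) = some (some (c, p))) →
      (∀ k k', k < L → k' < L' → s + k ≠ s' + k') →
      s + L ≤ N → s' + L' ≤ N →
      L + L' ≤ n c := by
    intro s s' L L' c S S' ⟨hc1, hs1, hm1⟩ ⟨hc2, hs2, hm2⟩ hne hsl hsl'
    have hdisj : Disjoint S S' := by
      rw [Finset.disjoint_left]
      intro p hp hp'
      obtain ⟨k, hk, he⟩ := hm1 p hp
      obtain ⟨k', hk', he'⟩ := hm2 p hp'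
      exact hne k k' hk hk' (hginj (s+k) (s'+k') (by omega) (by omega) (he.trans he'.symm))
    have := Finset.card_le_card (Finset.union_subset hs1 hs2)
    rwa [Finset.card_union_of_disjoint hdisj, hc1, hc2, Finset.card_range] at this
  have main : L1 + L2 + L3 ≤ n 0 + n 1 + n 2 := by
    apply three_runs n hmono h3 L1 L2 L3 c1 c2 c3
    · intro h
      obtain ⟨hc, hs, _⟩ := hd1 h
      have := Finset.card_le_card hs
      rwa [hc, Finset.card_range] at this
    · intro h
      obtain ⟨hc, hs, _⟩ := hd2 h
      have := Finset.card_le_card hs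
      rwa [hc, Finset.card_range] at this
    · intro h
      obtain ⟨hc, hs, _⟩ := hd3 h
      have := Finset.card_le_card hs
      rwa [hc, Finset.card_range] at this
    · intro h1 h2 e12
      exact pairBound 0 (a+1) L1 L2 c1 S1 S2 (hd1 h1) (e12 ▸ hd2 h2)
        (fun k k' hk hk' => by omega) (by omega) (by omega)
    · intro h1 h3' e13
      exact pairBound 0 (b+1) L1 L3 c1 S1 S3 (hd1 h1) (e13 ▸ hd3 h3')
        (fun k k' hk hk' => by omega) (by omega) (by omega)
    · intro h2 h3' e23
      exact pairBound (a+1) (b+1) L2 L3 c2 S2 S3 (hd2 h2) (e23 ▸ hd3 h3')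
        (fun k k' hk hk' => by omega) (by omega) (by omega)
    · intro h1 h2 h3' e12 e23
      obtain ⟨hc1', hs1, hm1⟩ := hd1 h1
      obtain ⟨hc2', hs2, hm2⟩ := hd2 h2
      obtain ⟨hc3', hs3, hm3⟩ := hd3 h3'
      rw [← e12] at hs2 hm2
      rw [← e23, ← e12] at hs3 hm3
      have d12 : Disjoint S1 S2 := by
        rw [Finset.disjoint_left]
        intro p hp hp'
        obtain ⟨k, hk, he⟩ := hm1 p hp
        obtain ⟨k', hk', he'⟩ := hm2 p hp'
        have := hginj (0+k) (a+1+k') (by omega) (by omega) (he.trans he'.symm)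
        omega
      have d13 : Disjoint S1 S3 := by
        rw [Finset.disjoint_left]
        intro p hp hp'
        obtain ⟨k, hk, he⟩ := hm1 p hp
        obtain ⟨k', hk', he'⟩ := hm3 p hp'
        have := hginj (0+k) (b+1+k') (by omega) (by omega) (he.trans he'.symm)
        omega
      have d23 : Disjoint S2 S3 := by
        rw [Finset.disjoint_left]
        intro p hp hp'
        obtain ⟨k, hk, he⟩ := hm2 p hp
        obtain ⟨k', hk', he'⟩ := hm3 p hp'
        have := hginj (a+1+k) (b+1+k') (by omega) (by omega) (he.trans he'.symm)
        omega
      have hsub : S1 ∪ S2 ∪ S3 ⊆ Finset.range (n c1) :=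
        Finset.union_subset (Finset.union_subset hs1 hs2) hs3
      have := Finset.card_le_card hsub
      rwa [Finset.card_union_of_disjoint (Finset.disjoint_union_left.mpr ⟨d13, d23⟩),
        Finset.card_union_of_disjoint d12, hc1', hc2', hc3', Finset.card_range] at this
  omega

lemma no_long_path (n : ℕ → ℕ) (hmono : Antitone n) (h3 : 1 ≤ n 2) :
    ¬ ContainsCopy (pathGraph (n 0 + n 1 + n 2 + 3)) (cone (cone (pathsUnion n))) := by
  rintro ⟨f, finj, fadj⟩
  apply no_long_core n hmono h3 (n 0 + n 1 + n 2 + 3) rfl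
    (fun i => if h : i < n 0 + n 1 + n 2 + 3 then f ⟨i, h⟩ else none)
  · intro i j hi hj he
    rw [dif_pos hi, dif_pos hj] at he
    exact Fin.mk.inj_iff.mp (finj he)
  · intro i hi
    rw [dif_pos (show i < n 0 + n 1 + n 2 + 3 by omega), dif_pos hi]
    exact fadj ⟨i, by omega⟩ ⟨i+1, hi⟩ (pathGraph_adj.mpr (Or.inl rfl))
theorem K2_join_longest_path (n : ℕ → ℕ) (hmono : Antitone n) (h3 : 1 ≤ n 2) :
    ContainsCopy (pathGraph (n 0 + n 1 + n 2 + 2)) (cone (cone (pathsUnion n))) ∧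
    ¬ ContainsCopy (pathGraph (n 0 + n 1 + n 2 + 3)) (cone (cone (pathsUnion n))) ∧
    ∀ i, 3 ≤ i → i ≤ n 0 + n 1 + n 2 + 2 →
      ContainsCopy (pathGraph i)
        (cone (cone (pathsUnion (fun j => if j < 3 then n j else 0)))) := by
  refine ⟨buildPath n (n 0) (n 1) (n 2) le_rfl le_rfl le_rfl,
    no_long_path n hmono h3, ?_⟩
  intro i hi3 hile
  have hn10 : n 1 ≤ n 0 := hmono (by omega)
  have hn21 : n 2 ≤ n 1 := hmono (by omega)
  set m : ℕ → ℕ := fun j => if j < 3 then n j else 0 with hm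
  have hm0 : m 0 = n 0 := if_pos (by omega)
  have hm1 : m 1 = n 1 := if_pos (by omega)
  have hm2 : m 2 = n 2 := if_pos (by omega)
  obtain ⟨aa, bb, cc, h1, h2, h3', h4⟩ :
      ∃ a b c, a ≤ n 0 ∧ b ≤ n 1 ∧ c ≤ n 2 ∧ a + b + c + 2 = i :=
    ⟨min (i-2) (n 0), min (i - 2 - min (i-2) (n 0)) (n 1),
      i - 2 - min (i-2) (n 0) - min (i - 2 - min (i-2) (n 0)) (n 1),
      by omega, by omega, by omega, by omega⟩
  have hb := buildPath m aa bb cc (by rw [hm0]; exact h1) (by rw [hm1]; exact h2)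
    (by rw [hm2]; exact h3')
  rw [h4] at hb
  exact hb
end
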